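/- Let R be a principal ideal domain. Every metabolic non-degenerate symmetric bilinear form (M, λ) on a finitely generated free R-module is isomorphic to an orthogonal direct sum of rank-2 forms, each of which admits a unimodular isotropic vector. Conversely, any orthogonal direct sum of rank-2 non-degenerate forms each possessing a unimodular isotropic vector is metabolic. -/

import Mathlib

/-- A vector `v` of a module is unimodular if the submodule it generates is free
on `v` and is a direct summand. -/
def Unimodular (R : Type*) [CommRing R] {M : Type*} [AddCommGroup M] [Module R M]
    (v : M) : Prop :=
  (∀ a : R, a • v = 0 → a = 0) ∧ ∃ q : Submodule R M, IsCompl (Submodule.span R {v}) q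

/-- A form `B` on `M` is metabolic if it has a Lagrangian `L`: the form vanishes on
`L`, and the null-composite sequence `0 → L → M ≅ M* → L* → 0` is exact; i.e. the map
`M → L*`, `m ↦ B m |_L`, has kernel exactly `L` and is surjective. -/
def Metabolic (R : Type*) [CommRing R] {M : Type*} [AddCommGroup M] [Module R M]
    (B : LinearMap.BilinForm R M) : Prop :=
  ∃ L : Submodule R M,
    (∀ x ∈ L, ∀ y ∈ L, B x y = 0) ∧
    LinearMap.ker ((L.subtype.dualMap).comp B) = L ∧
    Function.Surjective ((L.subtype.dualMap).comp B)

/-- The pairing on `Fin 2 → R` given by a 2×2 matrix. -/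
def bform {R : Type*} [CommRing R] (G : Matrix (Fin 2) (Fin 2) R) (u v : Fin 2 → R) : R :=
  ∑ a, ∑ b, G a b * u a * v b

section Block
open scoped Matrix
variable {R : Type*} [CommRing R] [IsDomain R]

lemma block_main {G : Matrix (Fin 2) (Fin 2) R} (hG : G.IsSymm) (hdet : IsUnit G.det)
    {x : Fin 2 → R} (hx : Unimodular R x) (hiso : bform G x x = 0) :
    ∃ z : Fin 2 → R, bform G x z = 1 ∧ bform G z x = 1 ∧
      ∀ u, bform G u x = 0 → ∃ a : R, u = a • x := by
  obtain ⟨hx1, q, hq⟩ := hx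
  have hx0 : x ≠ 0 := fun h => one_ne_zero (hx1 1 (by simp [h]))
  -- a functional `g` with `g x = 1`
  set g : (Fin 2 → R) →ₗ[R] R :=
    (LinearEquiv.coord R _ x hx0).toLinearMap.comp (Submodule.linearProjOfIsCompl _ q hq) with hgdef
  have hg1 : g x = 1 := by
    have hmem : x ∈ Submodule.span R {x} := Submodule.mem_span_singleton_self x
    have hp : (Submodule.linearProjOfIsCompl _ q hq) x = ⟨x, hmem⟩ :=
      Submodule.linearProjOfIsCompl_apply_left hq ⟨x, hmem⟩
    simp [hgdef, hp, LinearEquiv.coord_self]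
  set c : Fin 2 → R := fun b => g (Pi.single b 1) with hcdef
  set z : Fin 2 → R := G⁻¹ *ᵥ c with hzdef
  have hz : G *ᵥ z = c := by
    rw [hzdef, Matrix.mulVec_mulVec, Matrix.mul_nonsing_inv _ hdet, Matrix.one_mulVec]
  have h0 := congrFun hz 0
  have h1 := congrFun hz 1
  simp [Matrix.mulVec, dotProduct, Fin.sum_univ_two] at h0 h1
  have hs : ∀ a b, G a b = G b a := fun a b => by rw [← Matrix.transpose_apply G b a, hG]
  have hgx : g x = x 0 * c 0 + x 1 * c 1 := by
    have hxe : x = x 0 • (Pi.single 0 1 : Fin 2 → R) + x 1 • (Pi.single 1 1 : Fin 2 → R) := by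
      funext a; fin_cases a <;> simp
    rw [hcdef]
    conv_lhs => rw [hxe]
    simp [smul_eq_mul]
  have hxz : bform G x z = 1 := by
    rw [show (1:R) = g x from hg1.symm, hgx]
    simp only [bform, Fin.sum_univ_two]
    linear_combination x 0 * h0 + x 1 * h1
  have hzx : bform G z x = 1 := by
    rw [← hxz]
    simp only [bform, Fin.sum_univ_two]
    linear_combination z 0 * x 1 * hs 0 1 + z 1 * x 0 * hs 1 0
  refine ⟨z, hxz, hzx, ?_⟩
  -- matrix with columns x, z
  set P : Matrix (Fin 2) (Fin 2) R := Matrix.of fun a b => ![x, z] b a with hPdef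
  have hP : IsUnit P.det := by
    have key : P.det * P.det * G.det = -1 := by
      have hA : bform G x x = 0 := hiso
      have hB : bform G x z = 1 := hxz
      have hC : bform G z x = 1 := hzx
      simp only [bform, Fin.sum_univ_two] at hA hB hC
      simp only [Matrix.det_fin_two, hPdef, Matrix.of_apply, Matrix.cons_val_zero,
        Matrix.cons_val_one, Matrix.head_cons]
      linear_combination
        (G 0 0 * z 0 * z 0 + G 0 1 * z 0 * z 1 + G 1 0 * z 1 * z 0 + G 1 1 * z 1 * z 1) * hA
        - (G 0 0 * z 0 * x 0 + G 0 1 * z 0 * x 1 + G 1 0 * z 1 * x 0 + G 1 1 * z 1 * x 1) * hB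
        - hC
    exact isUnit_of_dvd_unit ⟨P.det * G.det, by linear_combination -key⟩ isUnit_one.neg
  intro u hu
  set w : Fin 2 → R := P⁻¹ *ᵥ u with hwdef
  have huw : P *ᵥ w = u := by
    rw [hwdef, Matrix.mulVec_mulVec, Matrix.mul_nonsing_inv _ hP, Matrix.one_mulVec]
  have hu0 := congrFun huw 0
  have hu1 := congrFun huw 1
  simp [Matrix.mulVec, dotProduct, Fin.sum_univ_two, hPdef] at hu0 hu1
  have hw1 : w 1 = 0 := by
    have hA : bform G x x = 0 := hiso
    have hC : bform G z x = 1 := hzx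
    simp only [bform, Fin.sum_univ_two] at hA hC hu
    linear_combination hu + (G 0 0 * x 0 + G 0 1 * x 1) * hu0 +
      (G 1 0 * x 0 + G 1 1 * x 1) * hu1 - w 0 * hA - w 1 * hC
  refine ⟨w 0, funext fun a => ?_⟩
  fin_cases a
  · simpa [hw1, mul_comm] using hu0.symm
  · simpa [hw1, mul_comm] using hu1.symm

end Block

section Converse
variable {R : Type*} [CommRing R] [IsDomain R]
variable {M : Type*} [AddCommGroup M] [Module R M]

lemma converse_metabolic (B : LinearMap.BilinForm R M)
    (n : ℕ) (G : Fin n → Matrix (Fin 2) (Fin 2) R)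
    (hGs : ∀ i, (G i).IsSymm) (hGdet : ∀ i, IsUnit (G i).det)
    (x : Fin n → Fin 2 → R) (hxu : ∀ i, Unimodular R (x i))
    (hxiso : ∀ i, bform (G i) (x i) (x i) = 0)
    (e : M ≃ₗ[R] (Fin n × Fin 2 → R))
    (hGram : ∀ v w : M, B v w = ∑ i, bform (G i) (fun a => e v (i, a)) (fun a => e w (i, a))) :
    Metabolic R B := by
  choose z hxz hzx hzker using fun i => block_main (hGs i) (hGdet i) (hxu i) (hxiso i)
  set S : (Fin n → R) →ₗ[R] (Fin n × Fin 2 → R) :=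
    { toFun := fun c p => c p.1 * x p.1 p.2
      map_add' := fun c d => by funext p; simp [add_mul]
      map_smul' := fun r c => by funext p; simp [smul_eq_mul, mul_assoc] } with hSdef
  set T : (Fin n → R) →ₗ[R] M := e.symm.toLinearMap ∘ₗ S with hTdef
  have hTe : ∀ c (i : Fin n) (a : Fin 2), e (T c) (i, a) = c i * x i a := by
    intro c i a
    simp [hTdef, hSdef]
  set L : Submodule R M := LinearMap.range T with hLdef
  have hvan : ∀ u ∈ L, ∀ v ∈ L, B u v = 0 := by
    rintro _ ⟨c, rfl⟩ _ ⟨d, rfl⟩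
    rw [hGram]
    refine Finset.sum_eq_zero fun i _ => ?_
    have hi := hxiso i
    simp only [bform, Fin.sum_univ_two, hTe] at hi ⊢
    linear_combination (c i * d i) * hi
  have hφ : ∀ (v : M) (u : L), ((L.subtype.dualMap).comp B) v u = B v (u : M) := by
    intro v u; rfl
  refine ⟨L, hvan, ?_, ?_⟩
  · -- kernel is L
    refine le_antisymm ?_ ?_
    · intro v hv
      rw [LinearMap.mem_ker] at hv
      have hvx : ∀ i, bform (G i) (fun a => e v (i, a)) (x i) = 0 := by
        intro i
        have hw : T (Pi.single i 1) ∈ L := ⟨_, rfl⟩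
        have h0 : B v (T (Pi.single i 1)) = 0 := by
          have := congrArg (fun f => f (⟨_, hw⟩ : L)) hv
          simpa [hφ] using this
        rw [hGram] at h0
        have hcongr : ∀ j, bform (G j) (fun a => e v (j, a))
              (fun a => e (T (Pi.single i 1)) (j, a))
            = (if j = i then 1 else 0) * bform (G j) (fun a => e v (j, a)) (x j) := by
          intro j
          simp only [bform, Fin.sum_univ_two, hTe, Pi.single_apply]
          by_cases h : j = i <;> simp [h]
        rw [Finset.sum_congr rfl fun j _ => hcongr j] at h0
        simpa using h0
      have := fun i => hzker i _ (hvx i)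
      choose a ha using this
      refine ⟨a, e.injective ?_⟩
      funext p
      obtain ⟨i, b⟩ := p
      rw [hTe]
      have := congrFun (ha i) b
      simp only [Pi.smul_apply, smul_eq_mul] at this
      exact this.symm
    · intro v hv
      rw [LinearMap.mem_ker]
      ext u
      simpa [hφ] using hvan v hv u.1 u.2
  · -- surjectivity
    intro ℓ
    set t : Fin n → M := fun i => e.symm (fun p => if p.1 = i then z i p.2 else 0) with htdef
    have hwL : ∀ i, T (Pi.single i 1) ∈ L := fun i => ⟨_, rfl⟩
    set m : M := ∑ i, ℓ ⟨T (Pi.single i 1), hwL i⟩ • t i with hmdef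
    have hem : ∀ (j : Fin n) (a : Fin 2),
        e m (j, a) = ℓ ⟨T (Pi.single j 1), hwL j⟩ * z j a := by
      intro j a
      rw [hmdef, map_sum]
      simp only [map_smul, Finset.sum_apply, Pi.smul_apply, htdef,
        LinearEquiv.apply_symm_apply, smul_eq_mul, mul_ite, mul_zero]
      simp [Finset.sum_ite_eq]
    refine ⟨m, ?_⟩
    apply LinearMap.ext
    rintro ⟨u, hu⟩
    obtain ⟨c, rfl⟩ := hu
    have huL : T c ∈ L := ⟨c, rfl⟩
    have hTc : (⟨T c, huL⟩ : L) = ∑ j, c j • (⟨T (Pi.single j 1), hwL j⟩ : L) := by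
      apply Subtype.ext
      push_cast
      calc T c = T (∑ j, c j • (Pi.single j 1 : Fin n → R)) := by
            congr 1
            funext k
            simp [Pi.single_apply, Finset.sum_apply, mul_ite, Finset.sum_ite_eq]
        _ = ∑ j, c j • T (Pi.single j 1) := by rw [map_sum]; simp
    have hR : ℓ (⟨T c, huL⟩ : L) = ∑ j, c j * ℓ (⟨T (Pi.single j 1), hwL j⟩ : L) := by
      rw [hTc, map_sum]
      exact Finset.sum_congr rfl fun j _ => by rw [map_smul, smul_eq_mul]
    rw [hφ, hGram, hR]
    refine Finset.sum_congr rfl fun j _ => ?_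
    have hj := hzx j
    simp only [bform, Fin.sum_univ_two, hTe, hem] at hj ⊢
    linear_combination (c j * ℓ (⟨T (Pi.single j 1), hwL j⟩ : L)) * hj

end Converse

lemma unimod_e0 {R : Type*} [CommRing R] : Unimodular R (![1,0] : Fin 2 → R) := by
  constructor
  · intro a ha
    have := congrFun ha 0
    simpa using this
  · refine ⟨LinearMap.ker (LinearMap.proj 0 : (Fin 2 → R) →ₗ[R] R), ?_, ?_⟩
    · rw [Submodule.disjoint_def]
      intro u hu1 hu2
      obtain ⟨r, rfl⟩ := Submodule.mem_span_singleton.1 hu1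
      rw [LinearMap.mem_ker] at hu2
      simp only [LinearMap.proj_apply, Pi.smul_apply, Matrix.cons_val_zero, smul_eq_mul,
        mul_one] at hu2
      simp [hu2]
    · rw [codisjoint_iff, eq_top_iff]
      intro u _
      rw [Submodule.mem_sup]
      refine ⟨u 0 • ![1,0], Submodule.smul_mem _ _ (Submodule.mem_span_singleton_self _),
        u - u 0 • ![1,0], ?_, by abel⟩
      rw [LinearMap.mem_ker]
      simp [Matrix.vecHead]

section Forward
variable {R : Type*} [CommRing R] [IsDomain R] [IsPrincipalIdealRing R]
variable {M : Type*} [AddCommGroup M] [Module R M] [Module.Free R M] [Module.Finite R M]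

lemma forward_decomp (B : LinearMap.BilinForm R M) (hsymm : B.IsSymm) (h : Metabolic R B) :
    ∃ (n : ℕ) (G : Fin n → Matrix (Fin 2) (Fin 2) R),
      (∀ i, (G i).IsSymm) ∧ (∀ i, IsUnit (G i).det) ∧
      (∀ i, ∃ x : Fin 2 → R, Unimodular R x ∧ ∑ a, ∑ b, G i a b * x a * x b = 0) ∧
      ∃ e : M ≃ₗ[R] (Fin n × Fin 2 → R),
        ∀ v w : M, B v w = ∑ i, ∑ a, ∑ b, G i a b * e v (i, a) * e w (i, b) := by
  obtain ⟨L, hvan, hker, hsurj⟩ := h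
  set φ := (L.subtype.dualMap).comp B with hφdef
  have hφap : ∀ (v : M) (u : L), φ v u = B v (u : M) := fun _ _ => rfl
  have hBs : ∀ v w : M, B v w = B w v := fun v w => by
    have := hsymm.eq w v; simpa using this.symm
  obtain ⟨n, bL⟩ := Submodule.basisOfPid (Module.Free.chooseBasis R M) L
  have hee : ∀ i j, B (bL i : M) (bL j : M) = 0 :=
    fun i j => hvan _ (SetLike.coe_mem _) _ (SetLike.coe_mem _)
  choose f hfc using fun i => hsurj (bL.coord i)
  have hfb : ∀ i j, B (f i) (bL j : M) = if j = i then 1 else 0 := by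
    intro i j
    have h1 := congrArg (fun g => g (bL j)) (hfc i)
    simp only [hφap] at h1
    rw [h1, Module.Basis.coord_apply, Module.Basis.repr_self, Finsupp.single_apply]
  set s : Fin n → Fin n → R := fun i j => B (f i) (f j) with hsdef
  set f' : Fin n → M := fun i => f i - ∑ j, (if j < i then s i j else 0) • (bL j : M)
    with hf'def
  have hBf' : ∀ (v : M) (j : Fin n),
      B v (f' j) = B v (f j) - ∑ k, (if k < j then s j k else 0) * B v (bL k : M) := by
    intro v j
    simp only [hf'def, map_sub, map_sum, map_smul, smul_eq_mul]
  have hf'B : ∀ (v : M) (j : Fin n),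
      B (f' j) v = B (f j) v - ∑ k, (if k < j then s j k else 0) * B (bL k : M) v := by
    intro v j
    simp only [hf'def, map_sub, map_sum, map_smul, LinearMap.sub_apply,
      LinearMap.sum_apply, LinearMap.smul_apply, smul_eq_mul]
  have hf'e : ∀ i j, B (f' i) (bL j : M) = if j = i then 1 else 0 := by
    intro i j
    rw [hf'B, hfb, Finset.sum_eq_zero fun k _ => by simp [hee], sub_zero]
  have hef' : ∀ i j, B (bL j : M) (f' i) = if j = i then 1 else 0 := by
    intro i j
    rw [← hBs, hf'e]
  have hf'f' : ∀ i j, i ≠ j → B (f' i) (f' j) = 0 := by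
    intro i j hij
    have h1 : ∑ k, (if k < j then s j k else 0) * B (f' i) (bL k : M)
        = if i < j then s j i else 0 := by
      have e1 : ∀ k : Fin n, (if k < j then s j k else 0) * B (f' i) (bL k : M)
          = if k = i then (if k < j then s j k else 0) else 0 := by
        intro k
        rw [hf'e]
        by_cases h : k = i <;> simp [h]
      rw [Finset.sum_congr rfl fun k _ => e1 k, Finset.sum_ite_eq' Finset.univ i]
      simp
    have h2 : ∑ k, (if k < i then s i k else 0) * B (bL k : M) (f j)
        = if j < i then s i j else 0 := by
      have e1 : ∀ k : Fin n, (if k < i then s i k else 0) * B (bL k : M) (f j)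
          = if k = j then (if k < i then s i k else 0) else 0 := by
        intro k
        rw [hBs, hfb]
        by_cases h : k = j <;> simp [h]
      rw [Finset.sum_congr rfl fun k _ => e1 k, Finset.sum_ite_eq' Finset.univ j]
      simp
    have hss : s i j = s j i := hBs (f i) (f j)
    rw [hBf', hf'B, h1, h2]
    rcases hij.lt_or_gt with h | h
    · simp only [h, not_lt_of_gt h, if_true, if_false, sub_zero]
      exact sub_eq_zero_of_eq hss
    · simp only [h, not_lt_of_gt h, if_true, if_false, sub_zero]
      exact sub_eq_zero_of_eq rfl
  set Gm : Fin n → Matrix (Fin 2) (Fin 2) R := fun i => !![0, 1; 1, B (f' i) (f' i)]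
    with hGmdef
  set cvec : Fin n × Fin 2 → M := fun p => if p.2 = 0 then (bL p.1 : M) else f' p.1
    with hcvecdef
  have hBc : ∀ (i : Fin n) (a : Fin 2) (j : Fin n) (b : Fin 2),
      B (cvec (i, a)) (cvec (j, b)) = if i = j then Gm i a b else 0 := by
    intro i a j b
    fin_cases a <;> fin_cases b <;>
      simp only [hcvecdef, hGmdef] <;>
      by_cases h : i = j <;>
      simp [h, hee, hf'e, hef', Matrix.cons_val_zero, Matrix.cons_val_one, eq_comm]
    · exact (hf'f' i j h).symm
  have hLI : LinearIndependent R cvec := by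
    rw [Fintype.linearIndependent_iff]
    intro g hg
    have hg1 : ∀ j, g (j, 1) = 0 := by
      intro j
      have h0 := congrArg (fun v => B v (bL j : M)) hg
      simp only [map_sum, LinearMap.sum_apply, map_smul, LinearMap.smul_apply,
        smul_eq_mul, LinearMap.zero_apply, map_zero] at h0
      rw [Fintype.sum_prod_type] at h0
      simp only [Fin.sum_univ_two] at h0
      have key : ∀ i : Fin n, g (i, 0) * B (cvec (i, 0)) (bL j : M)
          + g (i, 1) * B (cvec (i, 1)) (bL j : M)
          = if i = j then g (i, 1) else 0 := by
        intro i
        have c0 : cvec (i, 0) = (bL i : M) := by simp [hcvecdef]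
        have c1 : cvec (i, 1) = f' i := by simp [hcvecdef]
        rw [c0, c1, hee, hf'e]
        by_cases h : i = j
        · simp [h]
        · simp [h, Ne.symm h]
      rw [Finset.sum_congr rfl fun i _ => key i, Finset.sum_ite_eq' Finset.univ j] at h0
      simpa using h0
    have hg0 : ∀ i, g (i, 0) = 0 := by
      have hsum : ∑ i, g (i, 0) • (bL i : M) = 0 := by
        have h0 := hg
        rw [Fintype.sum_prod_type] at h0
        simp only [Fin.sum_univ_two] at h0
        simpa [hg1, hcvecdef] using h0
      have hbLI : LinearIndependent R (fun i => (bL i : M)) :=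
        bL.linearIndependent.map' L.subtype (Submodule.ker_subtype L)
      exact fun i => Fintype.linearIndependent_iff.1 hbLI _ hsum i
    intro p
    obtain ⟨i, a⟩ := p
    fin_cases a
    · exact hg0 i
    · exact hg1 i
  have hspan : ⊤ ≤ Submodule.span R (Set.range cvec) := by
    intro m _
    set m' : M := m - ∑ i, (B m (bL i : M)) • f' i with hm'def
    have hφm' : φ m' = 0 := by
      refine bL.ext fun j => ?_
      rw [hφap, LinearMap.zero_apply, hm'def]
      simp only [map_sub, map_sum, map_smul, LinearMap.sub_apply, LinearMap.sum_apply,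
        LinearMap.smul_apply, smul_eq_mul]
      have key : ∀ i, B m (bL i : M) * B (f' i) (bL j : M)
          = if i = j then B m (bL j : M) else 0 := by
        intro i
        rw [hf'e]
        by_cases h : i = j
        · simp [h]
        · simp [h, Ne.symm h]
      rw [Finset.sum_congr rfl fun i _ => key i, Finset.sum_ite_eq' Finset.univ j]
      simp
    have hm'L : m' ∈ L := by rw [← hker]; exact LinearMap.mem_ker.2 hφm'
    have hrepr' : ∑ i, bL.repr ⟨m', hm'L⟩ i • (bL i : M) = m' := by
      have h1 := congrArg (Subtype.val) (bL.sum_repr ⟨m', hm'L⟩)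
      simpa only [Submodule.coe_sum, Submodule.coe_smul] using h1
    have hm'span : m' ∈ Submodule.span R (Set.range cvec) := by
      rw [← hrepr']
      refine Submodule.sum_mem _ fun i _ => Submodule.smul_mem _ _ ?_
      exact Submodule.subset_span ⟨(i, 0), by simp [hcvecdef]⟩
    have hfspan : ∀ i, f' i ∈ Submodule.span R (Set.range cvec) := fun i =>
      Submodule.subset_span ⟨(i, 1), by simp [hcvecdef]⟩
    have hmeq : m = m' + ∑ i, (B m (bL i : M)) • f' i := by rw [hm'def]; abel
    rw [hmeq]
    exact Submodule.add_mem _ hm'span (Submodule.sum_mem _ fun i _ =>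
      Submodule.smul_mem _ _ (hfspan i))
  set bc : Module.Basis (Fin n × Fin 2) R M := Module.Basis.mk hLI hspan with hbcdef
  have hbc : ∀ p, bc p = cvec p := fun p => by rw [hbcdef, Module.Basis.mk_apply]
  refine ⟨n, Gm, ?_, ?_, ?_, bc.equivFun, ?_⟩
  · intro i
    refine Matrix.IsSymm.ext fun a b => ?_
    fin_cases a <;> fin_cases b <;> simp [hGmdef]
  · intro i
    rw [hGmdef]
    simp only [Matrix.det_fin_two_of]
    simpa using isUnit_one.neg
  · intro i
    refine ⟨![1, 0], unimod_e0, ?_⟩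
    simp [hGmdef, Fin.sum_univ_two]
  · intro v w
    have expand : B v w = ∑ p : Fin n × Fin 2, ∑ q : Fin n × Fin 2,
        bc.equivFun v p * bc.equivFun w q * B (bc p) (bc q) := by
      conv_lhs => rw [← bc.sum_equivFun v, ← bc.sum_equivFun w]
      simp only [map_sum, map_smul, LinearMap.sum_apply, LinearMap.smul_apply, smul_eq_mul]
      rw [Finset.sum_comm]
      refine Finset.sum_congr rfl fun p _ => ?_
      rw [Finset.mul_sum]
      refine Finset.sum_congr rfl fun q _ => by ring
    rw [expand, Fintype.sum_prod_type]
    refine Finset.sum_congr rfl fun i _ => ?_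
    refine Finset.sum_congr rfl fun a _ => ?_
    rw [Fintype.sum_prod_type]
    rw [Finset.sum_eq_single i (fun j _ hj => Finset.sum_eq_zero fun b _ => by
      rw [hbc, hbc, hBc]; simp [Ne.symm hj]) (fun h => absurd (Finset.mem_univ i) h)]
    refine Finset.sum_congr rfl fun b _ => ?_
    rw [hbc, hbc, hBc, if_pos rfl]
    ring

end Forward

/-- Over a PID, a non-degenerate symmetric bilinear form on a finitely
generated free module is metabolic iff it is isometric to an orthogonal direct sum of
rank-2 non-degenerate symmetric forms, each possessing a unimodular isotropic vector. -/
theorem stmt_7 (R : Type*) [CommRing R] [IsDomain R] [IsPrincipalIdealRing R]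
    (M : Type*) [AddCommGroup M] [Module R M] [Module.Free R M] [Module.Finite R M]
    (B : LinearMap.BilinForm R M) (hsymm : B.IsSymm)
    (hnd : Function.Bijective fun v : M => B v) :
    Metabolic R B ↔
      ∃ (n : ℕ) (G : Fin n → Matrix (Fin 2) (Fin 2) R),
        (∀ i, (G i).IsSymm) ∧ (∀ i, IsUnit (G i).det) ∧
        (∀ i, ∃ x : Fin 2 → R, Unimodular R x ∧ ∑ a, ∑ b, G i a b * x a * x b = 0) ∧
        ∃ e : M ≃ₗ[R] (Fin n × Fin 2 → R),
          ∀ v w : M, B v w = ∑ i, ∑ a, ∑ b, G i a b * e v (i, a) * e w (i, b) := by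
  constructor
  · exact forward_decomp B hsymm
  · rintro ⟨n, G, hGs, hGdet, hGiso, e, hGram⟩
    choose x hxu hxiso using hGiso
    exact converse_metabolic B n G hGs hGdet x hxu hxiso e hGram
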